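/- Let A be a torsion-free abelian group of finite Prüfer rank (every finitely generated subgroup of A can be generated by at most r elements, for some fixed r) and let φ : A → A be an automorphism whose Reidemeister number is finite, i.e., the quotient of A by the image of the endomorphism a ↦ a - φ(a) is finite. Then φ has no nontrivial fixed points: C(φ) = {0}. -/

import Mathlib

/-- An automorphism of a torsion-free abelian group of finite Prüfer rank with finite
Reidemeister number (i.e. finite cokernel of `1 - φ`) has no nontrivial fixed points. -/
theorem fixedPoints_trivial_of_torsionFree
    {A : Type*} [AddCommGroup A] (r : ℕ)
    (hrk : ∀ H : AddSubgroup A, H.FG →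
      ∃ S : Finset A, S.card ≤ r ∧ AddSubgroup.closure ↑S = H)
    (htf : ∀ (a : A) (n : ℕ), n ≠ 0 → n • a = 0 → a = 0)
    (φ : A ≃+ A)
    (hR : Finite (A ⧸ (AddMonoidHom.id A - φ.toAddMonoidHom).range)) :
    ∀ a : A, φ a = a → a = 0 := by
  classical
  intro a ha
  set ψ : AddMonoid.End A := AddMonoidHom.id A - φ.toAddMonoidHom with hψdef
  have hψa : ψ a = 0 := by
    show (AddMonoidHom.id A - φ.toAddMonoidHom) a = 0
    rw [AddMonoidHom.sub_apply]
    simp [ha]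
  set n : ℕ := Nat.card (A ⧸ (AddMonoidHom.id A - φ.toAddMonoidHom).range) with hn
  have hn0 : n ≠ 0 := Nat.card_ne_zero.mpr ⟨inferInstance, hR⟩
  have hmem : ∀ x : A, ∃ y, ψ y = n • x := by
    intro x
    have h1 : ((n • x : A) : A ⧸ (AddMonoidHom.id A - φ.toAddMonoidHom).range) = 0 := by
      have : ((n • x : A) : A ⧸ (AddMonoidHom.id A - φ.toAddMonoidHom).range)
          = n • ((x : A) : A ⧸ (AddMonoidHom.id A - φ.toAddMonoidHom).range) := rfl
      rw [this, hn, card_nsmul_eq_zero']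
    have h2 : n • x ∈ (AddMonoidHom.id A - φ.toAddMonoidHom).range :=
      (QuotientAddGroup.eq_zero_iff _).mp h1
    obtain ⟨y, hy⟩ := h2
    exact ⟨y, hy⟩
  choose f hf using hmem
  set b : ℕ → A := fun k => Nat.rec a (fun _ y => f y) k with hb
  have hb0 : b 0 = a := rfl
  have hbs : ∀ k, ψ (b (k + 1)) = n • b k := fun k => hf (b k)
  have L1 : ∀ k, (ψ ^ k) (b k) = n ^ k • a := by
    intro k
    induction k with
    | zero => simp [hb0]
    | succ k ih =>
      have : (ψ ^ (k + 1)) (b (k + 1)) = (ψ ^ k) (ψ (b (k + 1))) := by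
        rw [pow_succ]; rfl
      rw [this, hbs k, map_nsmul, ih, ← smul_assoc, smul_eq_mul, pow_succ']
  have L2 : ∀ k m : ℕ, k < m → (ψ ^ m) (b k) = 0 := by
    intro k m hkm
    obtain ⟨j, rfl⟩ : ∃ j, m = (k + 1) + j := ⟨m - (k + 1), by omega⟩
    have h1 : (ψ ^ (k + 1)) (b k) = 0 := by
      have : (ψ ^ (k + 1)) (b k) = ψ ((ψ ^ k) (b k)) := by
        rw [pow_succ']; rfl
      rw [this, L1 k, map_nsmul, hψa, smul_zero]
    have : (ψ ^ (k + 1 + j)) (b k) = (ψ ^ j) ((ψ ^ (k + 1)) (b k)) := by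
      rw [add_comm (k+1) j, pow_add]; rfl
    rw [this, h1, map_zero]
  -- rank argument: b 0, ..., b r are ℤ-linearly dependent
  set T : Finset A := Finset.image (fun i : Fin (r + 1) => b (i : ℕ)) Finset.univ with hT
  obtain ⟨S, hScard, hScl⟩ := hrk (AddSubgroup.closure ↑T) ⟨T, rfl⟩
  have hdep : ¬ LinearIndependent ℤ (fun i : Fin (r + 1) => b i) := by
    intro li
    have hsub : Set.range (fun i : Fin (r + 1) => b i) ≤ Submodule.span ℤ (↑S : Set A) := by
      rintro x ⟨i, rfl⟩
      have hx : b (i : ℕ) ∈ AddSubgroup.closure (↑T : Set A) := by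
        apply AddSubgroup.subset_closure
        rw [hT]
        exact Finset.mem_coe.mpr (Finset.mem_image_of_mem (fun j : Fin (r + 1) => b (j : ℕ)) (Finset.mem_univ i))
      rw [← hScl] at hx
      rwa [← Submodule.span_int_eq_addSubgroupClosure] at hx
    have hcard := linearIndependent_le_span_aux' _ li (↑S : Set A) hsub
    simp only [Fintype.card_fin, Finset.coe_sort_coe, Fintype.card_coe] at hcard
    omega
  rw [Fintype.not_linearIndependent_iff] at hdep
  obtain ⟨g, hgsum, i₀, hgi₀⟩ := hdep
  set F : Finset (Fin (r + 1)) := Finset.univ.filter (fun i => g i ≠ 0) with hF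
  have hFne : F.Nonempty := ⟨i₀, by simp [hF, hgi₀]⟩
  set m : Fin (r + 1) := F.max' hFne with hm
  have hgm : g m ≠ 0 := by
    have := F.max'_mem hFne
    simp [hF] at this
    exact this
  have hlt : ∀ i : Fin (r + 1), g i ≠ 0 → i ≤ m := by
    intro i hi
    exact F.le_max' i (by simp [hF, hi])
  -- apply ψ^m to the relation
  have key : g m • ((n : ℤ) ^ (m : ℕ)) • a = 0 := by
    have h0 : (ψ ^ (m : ℕ)) (∑ i : Fin (r + 1), g i • b (i : ℕ)) = 0 := by
      rw [hgsum, map_zero]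
    rw [map_sum] at h0
    have hterm : ∀ i : Fin (r + 1), (ψ ^ (m : ℕ)) (g i • b (i : ℕ))
        = g i • (ψ ^ (m : ℕ)) (b (i : ℕ)) := fun i => AddMonoidHom.map_zsmul _ _ _
    simp only [hterm] at h0
    have hsingle : ∑ i : Fin (r + 1), g i • (ψ ^ (m : ℕ)) (b (i : ℕ))
        = g m • (ψ ^ (m : ℕ)) (b (m : ℕ)) := by
      apply Finset.sum_eq_single
      · intro i _ hne
        by_cases hgi : g i = 0
        · simp [hgi]
        · have hile : i ≤ m := hlt i hgi
          have hilt : (i : ℕ) < (m : ℕ) := by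
            have : i < m := lt_of_le_of_ne hile hne
            exact Fin.lt_iff_val_lt_val.mp this
          rw [L2 _ _ hilt, smul_zero]
      · intro h; exact absurd (Finset.mem_univ m) h
    rw [hsingle, L1] at h0
    rw [← h0]
    congr 1
    rw [← natCast_zsmul, ← Nat.cast_pow]
  have hz : (g m * (n : ℤ) ^ (m : ℕ)) • a = 0 := by
    rwa [mul_smul]
  set z : ℤ := g m * (n : ℤ) ^ (m : ℕ) with hzdef
  have hzne : z ≠ 0 := by
    apply mul_ne_zero hgm
    exact pow_ne_zero _ (by exact_mod_cast hn0)
  have hna : (z.natAbs : ℕ) • a = 0 := by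
    have h1 : (z.natAbs : ℤ) • a = 0 := by
      rcases Int.natAbs_eq z with h | h
      · rw [← h]; exact hz
      · have : (z.natAbs : ℤ) = -z := by omega
        rw [this, neg_smul, hz, neg_zero]
    rwa [natCast_zsmul] at h1
  exact htf a z.natAbs (Int.natAbs_ne_zero.mpr hzne) hna
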